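/- Vibrato first-derivative formula for the mean parameter: if X = μ(θ) + σ·Z with Z standard Gaussian, σ > 0 fixed, μ differentiable, and V : ℝ → ℝ bounded measurable, then d/dθ E[V(μ(θ) + σZ)] = μ'(θ) · E[V(μ(θ) + σZ) · Z/σ]. -/

import Mathlib

open MeasureTheory ProbabilityTheory Real


lemma aux_change (σ : ℝ) (hσ : 0 < σ) (W : ℝ → ℝ) (hW : Measurable W) (m : ℝ) :
    ∫ z, W (m + σ * z) ∂(gaussianReal 0 1)
      = ∫ x, gaussianPDFReal m (⟨σ^2, sq_nonneg σ⟩ * 1) x * W x := by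
  set v : NNReal := ⟨σ^2, sq_nonneg σ⟩ * 1 with hv
  have hvne : v ≠ 0 := by
    simp only [hv, mul_one, ne_eq, ← NNReal.coe_eq_zero]
    intro h
    change σ^2 * 1 = (0:ℝ) at h
    nlinarith
  have hmap : (gaussianReal 0 1).map (fun z => m + σ * z) = gaussianReal m v := by
    have h1 : (gaussianReal 0 1).map (σ * ·) = gaussianReal (σ * 0) v :=
      gaussianReal_map_const_mul σ
    have h2 : (gaussianReal (σ * 0) v).map (m + ·) = gaussianReal (σ * 0 + m) v :=
      gaussianReal_map_const_add m
    rw [← h1] at h2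
    rw [Measure.map_map (by fun_prop) (by fun_prop)] at h2
    simpa [Function.comp_def] using h2
  have h3 : ∫ z, W (m + σ * z) ∂(gaussianReal 0 1)
      = ∫ x, W x ∂(gaussianReal m v) := by
    rw [← hmap, integral_map (by fun_prop) hW.aestronglyMeasurable]
  rw [h3, gaussianReal_of_var_ne_zero _ hvne]
  have h4 : gaussianPDF m v = fun x => ((gaussianPDFReal m v x).toNNReal : ENNReal) := by
    funext x; rfl
  rw [h4, integral_withDensity_eq_integral_smul ((measurable_gaussianPDFReal m v).real_toNNReal) W]
  congr 1
  funext x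
  rw [NNReal.smul_def, Real.coe_toNNReal _ (gaussianPDFReal_nonneg _ _ _)]
  simp


lemma key_ineq {v u a : ℝ} (hv : 0 < v) (h : |a - u| ≤ 1) :
    |u| * Real.exp (-u^2/(2*v)) ≤
      Real.sqrt (8*v) * Real.exp (1/(4*v)) * Real.exp (-(8*v)⁻¹ * a^2) := by
  have h8 : (0:ℝ) < 8*v := by linarith
  -- step 1 : |u| * exp (-u^2/(16*v)) ≤ sqrt (8*v)
  have hstep1 : |u| * Real.exp (-u^2/(16*v)) ≤ Real.sqrt (8*v) := by
    rw [show Real.sqrt (8*v) = Real.sqrt (8*v) from rfl]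
    have hsq : (|u| * Real.exp (-u^2/(16*v)))^2 ≤ 8*v := by
      have he : u^2/(8*v) ≤ Real.exp (u^2/(8*v)) :=
        le_trans (by linarith [Real.add_one_le_exp (u^2/(8*v))]) le_rfl
      have h1 : u^2 ≤ 8*v * Real.exp (u^2/(8*v)) := by
        rw [div_le_iff₀ h8] at he; nlinarith [Real.exp_pos (u^2/(8*v))]
      have : (|u| * Real.exp (-u^2/(16*v)))^2
          = u^2 * Real.exp (-u^2/(8*v)) := by
        rw [mul_pow, sq_abs, ← Real.exp_nat_mul]
        ring_nf
      rw [this]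
      have h2 : Real.exp (-u^2/(8*v)) = (Real.exp (u^2/(8*v)))⁻¹ := by
        rw [← Real.exp_neg]; ring_nf
      rw [h2, mul_inv_le_iff₀ (Real.exp_pos _)]
      linarith [h1]
    have h0 : 0 ≤ |u| * Real.exp (-u^2/(16*v)) := by positivity
    nlinarith [Real.sq_sqrt (le_of_lt h8), Real.sqrt_nonneg (8*v)]
  -- step 2 : split the exponential
  have hsplit : Real.exp (-u^2/(2*v)) ≤ Real.exp (-u^2/(16*v)) * Real.exp (-u^2/(4*v)) := by
    rw [← Real.exp_add, Real.exp_le_exp]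
    have hu : 0 ≤ u^2 := sq_nonneg u
    rw [div_add_div _ _ (by positivity) (by positivity), div_le_div_iff₀ (by positivity) (by positivity)]
    nlinarith [mul_nonneg hu (mul_pos hv hv).le]
  -- step 3 : exp (-u^2/(4*v)) ≤ exp(1/(4*v)) * exp(-(8*v)⁻¹ * a^2)
  have hstep3 : Real.exp (-u^2/(4*v)) ≤ Real.exp (1/(4*v)) * Real.exp (-(8*v)⁻¹ * a^2) := by
    rw [← Real.exp_add, Real.exp_le_exp]
    have haux : a^2/2 - 1 ≤ u^2 := by nlinarith [sq_nonneg (a - 2*u), sq_abs (a-u), abs_nonneg (a-u)]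
    have : -(u^2)/(4*v) ≤ (2 - a^2)/(8*v) := by
      rw [div_le_div_iff₀ (by positivity) (by positivity)]; nlinarith
    calc -u^2/(4*v) ≤ (2 - a^2)/(8*v) := this
      _ = 1/(4*v) + -(8*v)⁻¹ * a^2 := by field_simp; ring
  calc |u| * Real.exp (-u^2/(2*v))
      ≤ |u| * (Real.exp (-u^2/(16*v)) * Real.exp (-u^2/(4*v))) := by
        apply mul_le_mul_of_nonneg_left hsplit (abs_nonneg u)
    _ = (|u| * Real.exp (-u^2/(16*v))) * Real.exp (-u^2/(4*v)) := by ring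
    _ ≤ Real.sqrt (8*v) * Real.exp (-u^2/(4*v)) := by
        apply mul_le_mul_of_nonneg_right hstep1 (Real.exp_pos _).le
    _ ≤ Real.sqrt (8*v) * (Real.exp (1/(4*v)) * Real.exp (-(8*v)⁻¹ * a^2)) := by
        apply mul_le_mul_of_nonneg_left hstep3 (Real.sqrt_nonneg _)
    _ = _ := by ring


lemma pdf_deriv (c vr : ℝ) (x : ℝ) (m : ℝ) :
    HasDerivAt (fun m => c * Real.exp (-(x-m)^2/(2*vr)))
      ((x-m)/vr * (c * Real.exp (-(x-m)^2/(2*vr)))) m := by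
  have h1 : HasDerivAt (fun m : ℝ => x - m) (-1) m := (hasDerivAt_id m).const_sub x
  have h2 := h1.fun_pow 2
  have h3 := (h2.fun_neg).div_const (2*vr)
  have h4 := h3.exp
  have h5 := h4.const_mul c
  convert h5 using 1
  · rfl
  · rfl
  simp only [Nat.cast_ofNat, pow_one]
  by_cases hvr : vr = 0
  · simp [hvr]
  · field_simp
    ring

theorem stmt_12 (μ : ℝ → ℝ) (σ : ℝ) (hσ : 0 < σ) (V : ℝ → ℝ)
    (hVmeas : Measurable V) (hVbdd : ∃ C, ∀ x, |V x| ≤ C)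
    (hμ : Differentiable ℝ μ) (θ : ℝ) :
    HasDerivAt (fun θ' => ∫ z, V (μ θ' + σ * z) ∂(gaussianReal 0 1))
      (deriv μ θ * ∫ z, V (μ θ + σ * z) * z / σ ∂(gaussianReal 0 1)) θ := by
  obtain ⟨C, hC⟩ := hVbdd
  have hC0 : 0 ≤ C := le_trans (abs_nonneg _) (hC 0)
  set v : NNReal := ⟨σ^2, sq_nonneg σ⟩ * 1 with hv
  have hvr : ((v:ℝ)) = σ^2 := by simp [hv]; exact mul_one _
  set m₀ := μ θ with hm₀
  set c : ℝ := (Real.sqrt (2*π*σ^2))⁻¹ with hc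
  have hc0 : 0 ≤ c := by positivity
  have hpdf : ∀ m x : ℝ, gaussianPDFReal m v x = c * Real.exp (-(x-m)^2/(2*σ^2)) := by
    intro m x
    rw [gaussianPDFReal, hvr, hc]
  set bound : ℝ → ℝ := fun x => (σ^2)⁻¹ * c * C * (Real.sqrt (8*σ^2) * Real.exp (1/(4*σ^2)))
      * Real.exp (-(8*σ^2)⁻¹ * (x - m₀)^2) with hbound
  have key := hasDerivAt_integral_of_dominated_loc_of_deriv_le (μ := volume) (x₀ := m₀)
    (s := Metric.ball m₀ 1) (F := fun m x => gaussianPDFReal m v x * V x)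
    (F' := fun m x => (x - m)/σ^2 * (gaussianPDFReal m v x * V x))
    (bound := bound) (Metric.ball_mem_nhds m₀ one_pos)
    (Filter.Eventually.of_forall fun m =>
      ((measurable_gaussianPDFReal m v).mul hVmeas).aestronglyMeasurable)
    (((integrable_gaussianPDFReal m₀ v).bdd_mul hVmeas.aestronglyMeasurable
        (c := C) (Filter.Eventually.of_forall fun x => by simpa [Real.norm_eq_abs] using hC x)).congr
      (Filter.Eventually.of_forall fun x => mul_comm _ _))
    (((((measurable_id.sub_const m₀).div_const _).mul
        ((measurable_gaussianPDFReal _ _).mul hVmeas))).aestronglyMeasurable)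
    ?_ ?_ ?_
  · -- conclude from key
    have hF := key.2
    have hchain := hF.comp θ (hμ.differentiableAt.hasDerivAt (x := θ))
    have hfun : (fun θ' => ∫ z, V (μ θ' + σ * z) ∂(gaussianReal 0 1))
        = (fun m => ∫ x, gaussianPDFReal m v x * V x) ∘ μ := by
      funext θ'
      exact aux_change σ hσ V hVmeas (μ θ')
    rw [hfun]
    have hder : (∫ x, (x - m₀)/σ^2 * (gaussianPDFReal m₀ v x * V x))
        = ∫ z, V (m₀ + σ * z) * z / σ ∂(gaussianReal 0 1) := by
      have h1 : (fun x => (x - m₀)/σ^2 * (gaussianPDFReal m₀ v x * V x))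
          = fun x => gaussianPDFReal m₀ v x * ((x - m₀)/σ^2 * V x) := by
        funext x; ring
      rw [h1, ← aux_change σ hσ (fun x => (x - m₀)/σ^2 * V x)
        (((measurable_id.sub_const m₀).div_const _).mul hVmeas) m₀]
      congr 1
      funext z
      have hz : m₀ + σ * z - m₀ = σ * z := by ring
      rw [hz]
      field_simp
    rw [hder] at hchain
    rw [mul_comm] at hchain
    exact hchain
  · -- bound
    refine Filter.Eventually.of_forall fun x => fun m hm => ?_
    rw [Metric.mem_ball, Real.dist_eq] at hm
    have hineq := key_ineq (v := σ^2) (u := x - m) (a := x - m₀) (by positivity)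
      (by rw [show x - m₀ - (x - m) = m - m₀ by ring]; exact hm.le)
    simp only [hpdf]
    have hexp : (0:ℝ) < Real.exp (-(x-m)^2/(2*σ^2)) := Real.exp_pos _
    rw [Real.norm_eq_abs, abs_mul, abs_mul, abs_div, abs_mul]
    have h1 : |x - m| / |σ^2| = |x - m| * (σ^2)⁻¹ := by
      rw [abs_of_pos (show (0:ℝ) < σ^2 by positivity)]; ring
    rw [h1, abs_of_nonneg hc0, abs_of_pos hexp]
    have hVx := hC x
    have hVx0 : (0:ℝ) ≤ |V x| := abs_nonneg _
    calc |x - m| * (σ^2)⁻¹ * (c * Real.exp (-(x-m)^2/(2*σ^2)) * |V x|)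
        ≤ |x - m| * (σ^2)⁻¹ * (c * Real.exp (-(x-m)^2/(2*σ^2)) * C) := by
          apply mul_le_mul_of_nonneg_left _ (by positivity)
          apply mul_le_mul_of_nonneg_left hVx (by positivity)
      _ = (σ^2)⁻¹ * c * C * (|x - m| * Real.exp (-(x-m)^2/(2*σ^2))) := by ring
      _ ≤ (σ^2)⁻¹ * c * C * (Real.sqrt (8*σ^2) * Real.exp (1/(4*σ^2))
            * Real.exp (-(8*σ^2)⁻¹ * (x - m₀)^2)) := by
          apply mul_le_mul_of_nonneg_left hineq (by positivity)
      _ = bound x := by rw [hbound]; ring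
  · -- bound integrable
    rw [hbound]
    exact ((integrable_exp_neg_mul_sq (show (0:ℝ) < (8*σ^2)⁻¹ by positivity)).comp_sub_right
      m₀).const_mul _
  · -- differentiability
    refine Filter.Eventually.of_forall fun x => fun m _ => ?_
    have heq : (fun m => gaussianPDFReal m v x * V x)
        = fun m => (c * Real.exp (-(x-m)^2/(2*σ^2))) * V x := by
      funext m; rw [hpdf]
    rw [heq]
    have := (pdf_deriv c (σ^2) x m).mul_const (V x)
    convert this using 1
    · rfl
    simp only [hpdf]
    ring
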